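/- The bracket on the vector space with basis {e_i : i ∈ ℕ, i ≥ 1} defined by [e_i, e_j] = c_{i,j} e_{i+j}, where c_{i,j} = 1 if i - j ≡ 1 (mod 3), c_{i,j} = 0 if i - j ≡ 0 (mod 3), and c_{i,j} = -1 if i - j ≡ -1 (mod 3), satisfies the Jacobi identity and antisymmetry, and hence defines a Lie algebra structure (the algebra 𝐧₁). -/

import Mathlib

/-- Structure constants of the Lie algebra `𝐧₁`: `c i j = 1, 0, -1` according to
whether `i - j ≡ 1, 0, -1 (mod 3)`. -/
def cc (i j : ℕ) : ℤ :=
  if ((i : ℤ) - j) % 3 = 1 then 1 else if ((i : ℤ) - j) % 3 = 2 then -1 else 0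

/-- The free `ℂ`-vector space on the basis `{e_i : i ≥ 1}` (indices are positive naturals). -/
abbrev N1Space := {n : ℕ // 0 < n} →₀ ℂ

/-- The bilinear bracket `[e_i, e_j] = c_{i,j} e_{i+j}` extended bilinearly. -/
noncomputable def n1br (f g : N1Space) : N1Space :=
  f.sum fun i a => g.sum fun j b =>
    (a * b * (cc i.1 j.1 : ℂ)) •
      Finsupp.single ⟨i.1 + j.1, Nat.add_pos_left i.2 j.1⟩ (1 : ℂ)

lemma cc_skew (i j : ℕ) : cc i j = - cc j i := by
  unfold cc; split_ifs <;> omega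

lemma cc_congr {i j i' j' : ℕ} (h1 : (i:ℤ)%3 = (i':ℤ)%3) (h2 : (j:ℤ)%3 = (j':ℤ)%3) :
    cc i j = cc i' j' := by
  unfold cc
  rw [Int.sub_emod, h1, h2, ← Int.sub_emod]

lemma cc_key : ∀ a b c : ℕ, a < 3 → b < 3 → c < 3 →
    cc b c * cc a ((b+c)%3) + cc c a * cc b ((c+a)%3) + cc a b * cc c ((a+b)%3) = 0 := by
  intro a b c ha hb hc
  interval_cases a <;> interval_cases b <;> interval_cases c <;> decide

lemma cc_jac (i j k : ℕ) :
    cc j k * cc i (j+k) + cc k i * cc j (k+i) + cc i j * cc k (i+j) = 0 := by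
  rw [cc_congr (i := j) (i' := j%3) (j' := k%3) (by omega) (by omega),
      cc_congr (i := i) (i' := i%3) (j' := (j%3+k%3)%3) (by omega) (by push_cast; omega),
      cc_congr (i := k) (i' := k%3) (j' := i%3) (by omega) (by omega),
      cc_congr (i := j) (i' := j%3) (j' := (k%3+i%3)%3) (by omega) (by push_cast; omega),
      cc_congr (i := i) (i' := i%3) (j' := j%3) (by omega) (by omega),
      cc_congr (i := k) (i' := k%3) (j' := (i%3+j%3)%3) (by omega) (by push_cast; omega)]
  exact cc_key _ _ _ (Nat.mod_lt _ (by norm_num)) (Nat.mod_lt _ (by norm_num))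
    (Nat.mod_lt _ (by norm_num))

lemma br_zero_left (g : N1Space) : n1br 0 g = 0 := by simp [n1br]
lemma br_zero_right (f : N1Space) : n1br f 0 = 0 := by simp [n1br]

lemma br_add_left (f f' g : N1Space) : n1br (f + f') g = n1br f g + n1br f' g := by
  unfold n1br
  apply Finsupp.sum_add_index' <;> intros <;> simp [add_mul, add_smul, Finsupp.sum_add]

lemma br_add_right (f g g' : N1Space) : n1br f (g + g') = n1br f g + n1br f g' := by
  unfold n1br
  rw [← Finsupp.sum_add]
  apply Finsupp.sum_congr
  intro i _
  apply Finsupp.sum_add_index' <;> intros <;> simp [mul_add, add_mul, add_smul, Finsupp.sum_add]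

lemma br_single (i j : {n : ℕ // 0 < n}) (a b : ℂ) :
    n1br (Finsupp.single i a) (Finsupp.single j b) =
      (a * b * (cc i.1 j.1 : ℂ)) •
        Finsupp.single ⟨i.1 + j.1, Nat.add_pos_left i.2 j.1⟩ (1 : ℂ) := by
  unfold n1br
  rw [Finsupp.sum_single_index, Finsupp.sum_single_index] <;> simp

lemma br_smul_left (c : ℂ) (f g : N1Space) : n1br (c • f) g = c • n1br f g := by
  unfold n1br
  rw [Finsupp.sum_smul_index, Finsupp.smul_sum]
  · apply Finsupp.sum_congr
    intro i _
    rw [Finsupp.smul_sum]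
    apply Finsupp.sum_congr
    intro j _
    rw [smul_smul]
    ring_nf
  · intro i; simp

lemma br_single_single_single (i j k : {n : ℕ // 0 < n}) (a b c : ℂ) :
    n1br (Finsupp.single i a) (n1br (Finsupp.single j b) (Finsupp.single k c)) =
      (a * b * c * ((cc j.1 k.1 * cc i.1 (j.1 + k.1) : ℤ) : ℂ)) •
        Finsupp.single ⟨i.1 + (j.1 + k.1), Nat.add_pos_left i.2 _⟩ (1 : ℂ) := by
  rw [br_single]
  have : (b * c * (cc j.1 k.1 : ℂ)) •
      Finsupp.single (⟨j.1 + k.1, Nat.add_pos_left j.2 k.1⟩ : {n : ℕ // 0 < n}) (1 : ℂ) =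
      (b * c * (cc j.1 k.1 : ℂ)) • Finsupp.single ⟨j.1 + k.1, Nat.add_pos_left j.2 k.1⟩ (1 : ℂ) :=
    rfl
  rw [show ((b * c * (cc j.1 k.1 : ℂ)) •
      Finsupp.single (⟨j.1 + k.1, Nat.add_pos_left j.2 k.1⟩ : {n : ℕ // 0 < n}) (1 : ℂ)) =
      Finsupp.single (⟨j.1 + k.1, Nat.add_pos_left j.2 k.1⟩ : {n : ℕ // 0 < n})
        (b * c * (cc j.1 k.1 : ℂ)) by rw [Finsupp.smul_single, smul_eq_mul, mul_one]]
  rw [br_single]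
  simp only [Int.cast_mul]
  congr 1
  ring

/-- the bracket `[e_i,e_j] = c_{i,j} e_{i+j}` on the span of `{e_i : i ≥ 1}`
is antisymmetric and satisfies the Jacobi identity, hence defines a Lie algebra `𝐧₁`. -/
theorem statement0 :
    (∀ f g : N1Space, n1br f g = - n1br g f) ∧
    (∀ f g h : N1Space,
      n1br f (n1br g h) + n1br g (n1br h f) + n1br h (n1br f g) = 0) := by
  constructor
  · intro f g
    induction f using Finsupp.induction_linear with
    | zero => simp [br_zero_left, br_zero_right]
    | add f f' hf hf' => simp [br_add_left, br_add_right, hf, hf']; abel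
    | single i a =>
      induction g using Finsupp.induction_linear with
      | zero => simp [br_zero_left, br_zero_right]
      | add g g' hg hg' => simp [br_add_left, br_add_right, hg, hg']; abel
      | single j b =>
        rw [br_single, br_single, cc_skew i.1 j.1]
        have hij : (⟨i.1 + j.1, Nat.add_pos_left i.2 j.1⟩ : {n : ℕ // 0 < n}) =
            ⟨j.1 + i.1, Nat.add_pos_left j.2 i.1⟩ := by
          ext; exact Nat.add_comm _ _
        rw [hij]
        push_cast
        module
  · intro f g h
    induction f using Finsupp.induction_linear with
    | zero => simp [br_zero_left, br_zero_right]
    | add f f' hf hf' =>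
      simp only [br_add_left, br_add_right]
      have H := congrArg₂ (· + ·) hf hf'
      simp only [add_zero] at H
      rw [← H]; abel
    | single i a =>
    induction g using Finsupp.induction_linear with
    | zero => simp [br_zero_left, br_zero_right]
    | add g g' hg hg' =>
      simp only [br_add_left, br_add_right]
      have H := congrArg₂ (· + ·) hg hg'
      simp only [add_zero] at H
      rw [← H]; abel
    | single j b =>
    induction h using Finsupp.induction_linear with
    | zero => simp [br_zero_left, br_zero_right]
    | add h h' hh hh' =>
      simp only [br_add_left, br_add_right]
      have H := congrArg₂ (· + ·) hh hh'
      simp only [add_zero] at H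
      rw [← H]; abel
    | single k c =>
      rw [br_single_single_single, br_single_single_single, br_single_single_single]
      have e1 : (⟨j.1 + (k.1 + i.1), Nat.add_pos_left j.2 _⟩ : {n : ℕ // 0 < n}) =
          ⟨i.1 + (j.1 + k.1), Nat.add_pos_left i.2 _⟩ := by
        apply Subtype.ext; show j.1 + (k.1 + i.1) = i.1 + (j.1 + k.1); omega
      have e2 : (⟨k.1 + (i.1 + j.1), Nat.add_pos_left k.2 _⟩ : {n : ℕ // 0 < n}) =
          ⟨i.1 + (j.1 + k.1), Nat.add_pos_left i.2 _⟩ := by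
        apply Subtype.ext; show k.1 + (i.1 + j.1) = i.1 + (j.1 + k.1); omega
      rw [e1, e2, ← add_smul, ← add_smul]
      convert zero_smul ℂ _
      have := cc_jac i.1 j.1 k.1
      push_cast
      have hz : ((cc j.1 k.1 * cc i.1 (j.1+k.1) + cc k.1 i.1 * cc j.1 (k.1+i.1) +
          cc i.1 j.1 * cc k.1 (i.1+j.1) : ℤ) : ℂ) = 0 := by rw [this]; norm_num
      push_cast at hz
      linear_combination (a*b*c) * hz
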